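/- Let X be a Tychonoff space. Then X is locally realcompact if and only if X ⊆ βX \ cl_{βX}(υX \ X), i.e., X is disjoint from the closure in βX of υX \ X. -/

import Mathlib

set_option linter.unusedSectionVars false
set_option maxHeartbeats 1000000

open Topology Filter Real Set

def IsRealcompactSpace (Y : Type) [TopologicalSpace Y] : Prop :=
  ∃ (ι : Type) (f : Y → ι → ℝ), Topology.IsClosedEmbedding f

def hewitt (X : Type) [TopologicalSpace X] : Set (StoneCech X) :=
  ⋂₀ {C : Set (StoneCech X) |
      (∃ f : StoneCech X → ℝ, Continuous f ∧ C = {x | f x ≠ 0}) ∧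
        Set.range (stoneCechUnit : X → StoneCech X) ⊆ C}

variable (X : Type) [TopologicalSpace X] [T35Space X]

lemma range_subset_hewitt :
    Set.range (stoneCechUnit : X → StoneCech X) ⊆ hewitt X := fun p hp =>
  Set.mem_sInter.2 fun _C hC => hC.2 hp

lemma isInducing_unit : Topology.IsInducing (stoneCechUnit : X → StoneCech X) := by
  rw [Topology.isInducing_iff_nhds]
  intro x
  refine le_antisymm ((continuous_stoneCechUnit.tendsto x).le_comap) ?_
  intro s hs
  obtain ⟨U, hUs, hUopen, hxU⟩ := mem_nhds_iff.1 hs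
  obtain ⟨f, hf, hf0, hf1⟩ :=
    CompletelyRegularSpace.completely_regular x Uᶜ hUopen.isClosed_compl (by simpa)
  have hFc : Continuous fun p => ((stoneCechExtend hf p : unitInterval) : ℝ) :=
    continuous_subtype_val.comp (continuous_stoneCechExtend hf)
  refine mem_comap.2 ⟨{p | ((stoneCechExtend hf p : unitInterval) : ℝ) < 1}, ?_, ?_⟩
  · have hopen : IsOpen {p : StoneCech X | ((stoneCechExtend hf p : unitInterval) : ℝ) < 1} :=
      isOpen_lt hFc continuous_const
    refine hopen.mem_nhds ?_
    have : stoneCechExtend hf (stoneCechUnit x) = f x := congrFun (stoneCechExtend_extends hf) x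
    simp only [Set.mem_setOf_eq, this, hf0]
    norm_num
  · intro y hy
    have hz : stoneCechExtend hf (stoneCechUnit y) = f y :=
      congrFun (stoneCechExtend_extends hf) y
    simp only [Set.mem_preimage, Set.mem_setOf_eq, hz] at hy
    have : y ∈ U := by
      by_contra hyU
      have h1 : f y = 1 := hf1 (Set.mem_compl hyU)
      rw [h1] at hy
      norm_num at hy
    exact hUs this

/-- every continuous real function on `X` extends continuously to the Hewitt
realcompactification. -/
lemma hewitt_extension (g : X → ℝ) (hg : Continuous g) :
    ∃ G : StoneCech X → ℝ, ContinuousOn G (hewitt X) ∧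
      ∀ y, G (stoneCechUnit y) = g y := by
  have harc : ∀ y, Real.arctan (g y) ∈ Set.Icc (-(π/2)) (π/2) := fun y =>
    Set.mem_Icc_of_Ioo (Real.arctan_mem_Ioo (g y))
  set b : X → Set.Icc (-(π/2)) (π/2) := fun y => ⟨Real.arctan (g y), harc y⟩ with hb
  have hbc : Continuous b := Continuous.subtype_mk (Real.continuous_arctan.comp hg) _
  set F := stoneCechExtend hbc with hF
  have hFc : Continuous fun p => ((F p : ℝ)) := continuous_subtype_val.comp
    (continuous_stoneCechExtend hbc)
  have hFe : ∀ y, F (stoneCechUnit y) = b y := fun y => congrFun (stoneCechExtend_extends hbc) y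
  -- on the Hewitt realcompactification, cos (F p) ≠ 0
  have hcos : ∀ p ∈ hewitt X, Real.cos (F p : ℝ) ≠ 0 := by
    intro p hp
    have : p ∈ {x | Real.cos (F x : ℝ) ≠ 0} := by
      refine Set.mem_sInter.1 hp _ ⟨⟨fun x => Real.cos (F x : ℝ),
        Real.continuous_cos.comp hFc, rfl⟩, ?_⟩
      rintro _ ⟨y, rfl⟩
      simp only [Set.mem_setOf_eq, hFe y, hb]
      have := Real.cos_arctan (g y)
      rw [this]
      positivity
    exact this
  refine ⟨fun p => Real.tan (F p : ℝ), ?_, ?_⟩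
  · intro p hp
    have h1 : ContinuousAt (Real.tan ∘ fun p => ((F p : ℝ))) p :=
      ContinuousAt.comp (Real.continuousAt_tan.2 (hcos p hp)) hFc.continuousAt
    exact h1.continuousWithinAt
  · intro y
    simp only [hFe y, hb, Real.tan_arctan]

lemma j_closedEmbedding :
    Topology.IsClosedEmbedding (fun (p : StoneCech X) (g : C(StoneCech X, ℝ)) => g p) := by
  apply Continuous.isClosedEmbedding (continuous_pi fun g => g.continuous)
  intro p q hpq
  by_contra hne
  obtain ⟨f, hf0, hf1, -⟩ := exists_continuous_zero_one_of_isClosed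
    (isClosed_singleton (x := p)) (isClosed_singleton (x := q))
    (by simpa using hne)
  have h0 : f p = 0 := by simpa using hf0 rfl
  have h1 : f q = 1 := by simpa using hf1 rfl
  have hfq : f p = f q := congrFun hpq f
  rw [h0, h1] at hfq
  norm_num at hfq

lemma realcompact_closed_inter (K : Set (StoneCech X)) (hK : IsClosed K) :
    IsRealcompactSpace ↥(K ∩ hewitt X) := by
  classical
  set e : X → StoneCech X := stoneCechUnit with he
  set S := {f : StoneCech X → ℝ // Continuous f ∧ Set.range e ⊆ {x | f x ≠ 0}} with hS
  set M := K ∩ hewitt X with hM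
  set j : StoneCech X → C(StoneCech X, ℝ) → ℝ := fun p g => g p with hj
  -- basic fact : points of the Hewitt realcompactification do not vanish on members of S
  have hnz : ∀ (m : ↥M) (f : S), f.1 m.1 ≠ 0 := by
    rintro ⟨m, hmK, hmH⟩ ⟨f, hfc, hfr⟩
    exact Set.mem_sInter.1 hmH _ ⟨⟨f, hfc, rfl⟩, hfr⟩
  set Φ : ↥M → (C(StoneCech X, ℝ) ⊕ S) → ℝ :=
    fun m => Sum.elim (fun g => g m.1) (fun f => (f.1 m.1)⁻¹) with hΦ
  have hΦc : Continuous Φ := by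
    refine continuous_pi fun i => ?_
    cases i with
    | inl g => exact g.continuous.comp continuous_subtype_val
    | inr f =>
      exact Continuous.inv₀ ((f.2.1.comp continuous_subtype_val)) (fun m => hnz m f)
  have hπ : Continuous fun (t : (C(StoneCech X, ℝ) ⊕ S) → ℝ) (g : C(StoneCech X, ℝ)) =>
      t (Sum.inl g) := continuous_pi fun g => continuous_apply (Sum.inl g)
  have hcomp : (fun t (g : C(StoneCech X, ℝ)) => t (Sum.inl g)) ∘ Φ
      = j ∘ (Subtype.val : ↥M → StoneCech X) := rfl
  have hjZ := j_closedEmbedding X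
  have hind : Topology.IsInducing Φ := by
    apply Topology.IsInducing.of_comp hΦc hπ
    rw [hcomp]
    exact hjZ.isInducing.comp Topology.IsInducing.subtypeVal
  have hinj : Function.Injective Φ := by
    intro m m' hmm
    have : j m.1 = j m'.1 := by
      funext g
      exact congrFun hmm (Sum.inl g)
    exact Subtype.ext (hjZ.injective this)
  set T : Set ((C(StoneCech X, ℝ) ⊕ S) → ℝ) :=
    {t | (fun g => t (Sum.inl g)) ∈ j '' K ∧
      ∀ f : S, t (Sum.inr f) * t (Sum.inl ⟨f.1, f.2.1⟩) = 1} with hT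
  have hTclosed : IsClosed T := by
    refine IsClosed.inter (IsClosed.preimage hπ (hjZ.isClosedMap K hK)) ?_
    have heq : {t : (C(StoneCech X, ℝ) ⊕ S) → ℝ |
        ∀ f : S, t (Sum.inr f) * t (Sum.inl ⟨f.1, f.2.1⟩) = 1}
        = ⋂ f : S, {t | t (Sum.inr f) * t (Sum.inl ⟨f.1, f.2.1⟩) = 1} := by
      ext t; simp [Set.mem_iInter]
    show IsClosed {t : (C(StoneCech X, ℝ) ⊕ S) → ℝ |
        ∀ f : S, t (Sum.inr f) * t (Sum.inl ⟨f.1, f.2.1⟩) = 1}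
    rw [heq]
    refine isClosed_iInter fun f => isClosed_eq ?_ continuous_const
    exact ((continuous_apply (Sum.inr f)).mul (continuous_apply (Sum.inl ⟨f.1, f.2.1⟩ : C(StoneCech X, ℝ) ⊕ S)))
  have hrange : Set.range Φ = T := by
    apply Set.Subset.antisymm
    · rintro _ ⟨m, rfl⟩
      constructor
      · exact ⟨m.1, m.2.1, rfl⟩
      · intro f
        simp only [hΦ, Sum.elim_inl, Sum.elim_inr]
        exact inv_mul_cancel₀ (hnz m f)
    · rintro t ⟨⟨p, hpK, hpj⟩, hrec⟩
      have hval : ∀ f : S, t (Sum.inr f) * f.1 p = 1 := by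
        intro f
        have := hrec f
        rwa [← congrFun hpj ⟨f.1, f.2.1⟩] at this
      have hpH : p ∈ hewitt X := by
        refine Set.mem_sInter.2 ?_
        rintro C ⟨⟨f, hfc, rfl⟩, hfr⟩
        exact right_ne_zero_of_mul_eq_one (hval ⟨f, hfc, hfr⟩)
      refine ⟨⟨p, hpK, hpH⟩, ?_⟩
      funext i
      cases i with
      | inl g => exact congrFun hpj g
      | inr f =>
        simp only [hΦ, Sum.elim_inr]
        exact (eq_inv_of_mul_eq_one_left (hval f)).symm
  exact ⟨C(StoneCech X, ℝ) ⊕ S, Φ, ⟨⟨hind, hinj⟩, hrange ▸ hTclosed⟩⟩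

lemma mem_hewitt_of_unit (y : X) : stoneCechUnit y ∈ hewitt X :=
  range_subset_hewitt X ⟨y, rfl⟩

/-- `X` is locally realcompact iff
`X ⊆ βX \ cl_{βX}(υX \ X)`. -/
theorem stmt1 (X : Type) [TopologicalSpace X] [T35Space X] :
    (∀ x : X, ∃ U : Set X, IsOpen U ∧ x ∈ U ∧ IsRealcompactSpace (closure U)) ↔
      Set.range (stoneCechUnit : X → StoneCech X) ⊆
        (closure (hewitt X \ Set.range (stoneCechUnit : X → StoneCech X)))ᶜ := by
  constructor
  · -- locally realcompact → X misses cl(υX \ X)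
    intro h
    rintro p ⟨x, rfl⟩
    classical
    set e : X → StoneCech X := stoneCechUnit with he
    obtain ⟨U, hUopen, hxU, ι, hfun, hemb⟩ := h x
    obtain ⟨f, hfc, hf0, hf1⟩ := CompletelyRegularSpace.completely_regular x Uᶜ
      hUopen.isClosed_compl (by simpa using hxU)
    set F := stoneCechExtend hfc with hF
    set Fr : StoneCech X → ℝ := fun p => (F p : ℝ) with hFr
    have hFrc : Continuous Fr := continuous_subtype_val.comp (continuous_stoneCechExtend hfc)
    have hFe : ∀ y, Fr (e y) = (f y : ℝ) := by
      intro y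
      have hz : stoneCechExtend hfc (stoneCechUnit y) = f y :=
        congrFun (stoneCechExtend_extends hfc) y
      show ((stoneCechExtend hfc (stoneCechUnit y) : unitInterval) : ℝ) = (f y : ℝ)
      exact congrArg _ hz
    have hUsub : ∀ y : X, (f y : ℝ) < 1 → y ∈ U := by
      intro y hy
      by_contra hyU
      have h1 : f y = 1 := hf1 (Set.mem_compl hyU)
      rw [h1] at hy
      norm_num at hy
    set W := {p : StoneCech X | Fr p < 8⁻¹} with hW
    have hWopen : IsOpen W := isOpen_lt hFrc continuous_const
    have hexW : e x ∈ W := by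
      show Fr (e x) < 8⁻¹
      rw [hFe x, hf0]
      norm_num
    -- the main claim: points of W ∩ υX lie in X
    have hclaim : ∀ q, q ∈ W → q ∈ hewitt X → q ∈ Set.range e := by
      intro q hqW hqH
      set k : X → ℝ := fun y => max (4⁻¹ - (f y : ℝ)) 0 with hk
      have hkc : Continuous k :=
        (continuous_const.sub (continuous_subtype_val.comp hfc)).max continuous_const
      set g : ι → X → ℝ :=
        fun i y => k y * (if hy : y ∈ closure U then hfun ⟨y, hy⟩ i else 0) with hg
      have hgc : ∀ i, Continuous (g i) := by
        intro i
        rw [continuous_iff_continuousAt]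
        intro y
        rcases lt_or_ge (4⁻¹ : ℝ) ((f y : ℝ)) with hcase | hcase
        · have hO : IsOpen {z : X | (4⁻¹ : ℝ) < (f z : ℝ)} :=
            isOpen_lt continuous_const (continuous_subtype_val.comp hfc)
          have hev : g i =ᶠ[𝓝 y] fun _ => (0 : ℝ) := by
            filter_upwards [hO.mem_nhds hcase] with z hz
            have hz' : (4⁻¹ : ℝ) < (f z : ℝ) := hz
            have hkz : k z = 0 := max_eq_right (by linarith)
            simp [hg, hkz]
          exact continuousAt_const.congr hev.symm
        · set O : Set X := {z | (f z : ℝ) < 2⁻¹} with hO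
          have hOopen : IsOpen O := isOpen_lt (continuous_subtype_val.comp hfc) continuous_const
          have hOU : O ⊆ closure U := fun z hz =>
            subset_closure (hUsub z (lt_trans hz (by norm_num)))
          have hyO : y ∈ O := by
            simp only [hO, Set.mem_setOf_eq]
            have : (4⁻¹ : ℝ) < 2⁻¹ := by norm_num
            linarith
          have hrest : Continuous (O.restrict (g i)) := by
            have hre : O.restrict (g i) = fun z : O => k z.1 * hfun ⟨z.1, hOU z.2⟩ i := by
              funext z
              simp only [Set.restrict_apply, hg]
              show k z.1 * (if hy : z.1 ∈ closure U then hfun ⟨z.1, hy⟩ i else 0) = _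
              rw [dif_pos (hOU z.2)]
            rw [hre]
            have hc2 : Continuous fun z : O => hfun (⟨z.1, hOU z.2⟩ : ↥(closure U)) :=
              hemb.continuous.comp (Continuous.subtype_mk continuous_subtype_val _)
            exact (hkc.comp continuous_subtype_val).mul ((continuous_apply i).comp hc2)
          exact (continuousOn_iff_continuous_restrict.2 hrest).continuousAt
            (hOopen.mem_nhds hyO)
      choose G hGcont hGext using fun i => hewitt_extension X (g i) (hgc i)
      -- the trace filter at q
      have hAq : q ∈ closure (e '' U) := by
        rw [_root_.mem_closure_iff]
        intro o ho hqo
        obtain ⟨y, hy⟩ := denseRange_stoneCechUnit.exists_mem_open (ho.inter hWopen)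
          ⟨q, hqo, hqW⟩
        refine ⟨e y, hy.1, y, hUsub y ?_, rfl⟩
        have h8 := hy.2
        simp only [hW, Set.mem_setOf_eq, hFe y] at h8
        rw [← he, hFe y] at h8
        linarith
      have hNB : (comap (fun a : ↥(closure U) => e a.1) (𝓝 q)).NeBot := by
        rw [Filter.comap_neBot_iff]
        intro s hs
        obtain ⟨o, hosub, ho, hqo⟩ := mem_nhds_iff.1 hs
        have hq2 : q ∈ closure (e '' closure U) :=
          closure_mono (Set.image_mono (f := e) subset_closure) hAq
        obtain ⟨z, hz1, hz2⟩ := _root_.mem_closure_iff.1 hq2 o ho hqo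
        obtain ⟨y, hyA, rfl⟩ := hz2
        exact ⟨⟨y, hyA⟩, hosub hz1⟩
      haveI := hNB
      set G' := comap (fun a : ↥(closure U) => e a.1) (𝓝 q) with hG'
      have t1 : Tendsto (fun a : ↥(closure U) => e a.1) G' (𝓝 q) := tendsto_comap
      have t2 : Tendsto (fun a : ↥(closure U) => e a.1) G' (𝓝[hewitt X] q) :=
        tendsto_nhdsWithin_iff.2 ⟨t1, Filter.Eventually.of_forall fun a => mem_hewitt_of_unit X a.1⟩
      have hFrq : Fr q < 8⁻¹ := hqW
      set c : ℝ := 4⁻¹ - Fr q with hc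
      have hcpos : 0 < c := by rw [hc]; linarith
      have hkt : Tendsto (fun a : ↥(closure U) => k a.1) G' (𝓝 c) := by
        have hmax : Tendsto (fun a : ↥(closure U) => max (4⁻¹ - Fr (e a.1)) 0) G'
            (𝓝 (max (4⁻¹ - Fr q) 0)) :=
          (((continuous_const.sub hFrc).max continuous_const).tendsto q).comp t1
        rw [max_eq_left hcpos.le] at hmax
        refine hmax.congr ?_
        intro a
        rw [hk]
        simp only [hFe a.1]
      have hGt : ∀ i, Tendsto (fun a : ↥(closure U) => g i a.1) G' (𝓝 (G i q)) := by
        intro i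
        have hcw := (hGcont i q hqH).tendsto.comp t2
        refine hcw.congr ?_
        intro a
        simp only [Function.comp_apply, he, hGext i a.1]
      have hev : ∀ᶠ a : ↥(closure U) in G', k a.1 ≠ 0 := hkt.eventually_ne hcpos.ne'
      set t : ι → ℝ := fun i => G i q / c with ht
      have httend : Tendsto hfun G' (𝓝 t) := by
        rw [tendsto_pi_nhds]
        intro i
        have hdiv : Tendsto (fun a : ↥(closure U) => g i a.1 / k a.1) G' (𝓝 (t i)) :=
          (hGt i).div hkt hcpos.ne'
        refine hdiv.congr' ?_
        filter_upwards [hev] with a ha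
        simp only [hg]
        rw [dif_pos a.2, mul_div_cancel_left₀ _ ha]
      have htmem : t ∈ Set.range hfun := by
        have hcl : t ∈ closure (Set.range hfun) :=
          mem_closure_of_tendsto httend
            (Filter.Eventually.of_forall fun a => Set.mem_range_self a)
        rwa [hemb.isClosed_range.closure_eq] at hcl
      obtain ⟨a, ha⟩ := htmem
      have hat : Tendsto (fun b : ↥(closure U) => b) G' (𝓝 a) := by
        rw [hemb.isInducing.tendsto_nhds_iff]
        rw [ha]
        exact httend
      have hta : Tendsto (fun b : ↥(closure U) => e b.1) G' (𝓝 (e a.1)) :=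
        ((continuous_stoneCechUnit.comp continuous_subtype_val).tendsto a).comp hat
      exact ⟨a.1, tendsto_nhds_unique hta t1⟩
    -- conclude
    simp only [Set.mem_compl_iff]
    intro hmem
    obtain ⟨q, hqW, hqD⟩ := _root_.mem_closure_iff.1 hmem W hWopen hexW
    exact hqD.2 (hclaim q hqW hqD.1)
  · -- X ∩ cl(υX \ X) = ∅  →  locally realcompact
    intro h x
    set e : X → StoneCech X := stoneCechUnit with he
    set D := hewitt X \ Set.range e with hD
    have hx : e x ∈ (closure D)ᶜ := h ⟨x, rfl⟩
    have hnhds : (closure D)ᶜ ∈ 𝓝 (e x) := (isClosed_closure.isOpen_compl).mem_nhds hx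
    obtain ⟨C, hCnhds, hCclosed, hCsub⟩ := exists_mem_nhds_isClosed_subset hnhds
    set W := interior C with hW
    have hWnhds : W ∈ 𝓝 (e x) := interior_mem_nhds.2 hCnhds
    set U := e ⁻¹' W with hU
    have hUopen : IsOpen U := isOpen_interior.preimage continuous_stoneCechUnit
    have hxU : x ∈ U :=
      mem_of_mem_nhds (continuous_stoneCechUnit.continuousAt.preimage_mem_nhds hWnhds)
    refine ⟨U, hUopen, hxU, ?_⟩
    set K := closure (e '' U) with hK
    have hKC : K ⊆ C := by
      rw [hK]
      refine closure_minimal ?_ hCclosed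
      exact (Set.image_preimage_subset e W).trans interior_subset
    -- points of K ∩ hewitt are in the range of e
    have hKH : K ∩ hewitt X ⊆ Set.range e := by
      rintro p ⟨hpK, hpH⟩
      by_contra hpr
      exact (hCsub (hKC hpK)) (subset_closure ⟨hpH, hpr⟩)
    obtain ⟨ι, hfun, hemb⟩ := realcompact_closed_inter X K isClosed_closure
    have hclU : closure U = e ⁻¹' K := (isInducing_unit X).closure_eq_preimage_closure_image U
    -- the map from closure U to K ∩ hewitt X
    set ψ : ↥(closure U) → ↥(K ∩ hewitt X) :=
      fun y => ⟨e y.1, hclU.le y.2, mem_hewitt_of_unit X y.1⟩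
      with hψ
    have hψc : Continuous ψ :=
      Continuous.subtype_mk (continuous_stoneCechUnit.comp continuous_subtype_val) _
    have hψcomp : (Subtype.val : ↥(K ∩ hewitt X) → StoneCech X) ∘ ψ
        = e ∘ (Subtype.val : ↥(closure U) → X) := rfl
    have hψind : Topology.IsInducing ψ := by
      apply Topology.IsInducing.of_comp hψc continuous_subtype_val
      rw [hψcomp]
      exact (isInducing_unit X).comp Topology.IsInducing.subtypeVal
    have hψinj : Function.Injective ψ := by
      intro a b hab
      have h3 : e a.1 = e b.1 := congrArg Subtype.val hab
      exact Subtype.ext (injective_stoneCechUnit_of_t35Space h3)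
    have hψsurj : Function.Surjective ψ := by
      rintro ⟨p, hpK, hpH⟩
      obtain ⟨y, rfl⟩ := hKH ⟨hpK, hpH⟩
      have hy : y ∈ closure U := hclU.ge hpK
      exact ⟨⟨y, hy⟩, rfl⟩
    have hψemb : Topology.IsClosedEmbedding ψ :=
      ⟨⟨hψind, hψinj⟩, by rw [Set.range_eq_univ.2 hψsurj]; exact isClosed_univ⟩
    exact ⟨ι, hfun ∘ ψ, hemb.comp hψemb⟩
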